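/- Let X, Y be Polish spaces with Borel probability measures μ, ν, and let c : X × Y → [0,∞] be lower semi-continuous. Then the rectification c_r of c satisfies c_r = c L-almost surely. -/
import Mathlib


open MeasureTheory Set

/-- A set `A ⊆ X × Y` is `L`-negligible (w.r.t. `μ`, `ν`). -/
def LNeg {X Y : Type*} [MeasurableSpace X] [MeasurableSpace Y]
    (μ : Measure X) (ν : Measure Y) (A : Set (X × Y)) : Prop :=
  ∃ M : Set X, ∃ N : Set Y, MeasurableSet M ∧ MeasurableSet N ∧ μ M = 0 ∧ ν N = 0 ∧
    A ⊆ (M ×ˢ (Set.univ : Set Y)) ∪ ((Set.univ : Set X) ×ˢ N)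

/-- Property (i) of a rectification: every Borel dual pair `φ ⊕ ψ ≤ c` satisfies
`φ ⊕ ψ ≤ d` `L`-almost surely. -/
def SatI {X Y : Type*} [MeasurableSpace X] [MeasurableSpace Y]
    (μ : Measure X) (ν : Measure Y) (c : X × Y → ENNReal) (d : X × Y → ENNReal) : Prop :=
  ∀ φ : X → EReal, ∀ ψ : Y → EReal, Measurable φ → Measurable ψ →
    (∀ x, φ x ≠ ⊤) → (∀ y, ψ y ≠ ⊤) →
    (∀ x y, φ x + ψ y ≤ (c (x, y) : EReal)) →
    LNeg μ ν {p : X × Y | ¬ φ p.1 + ψ p.2 ≤ (d p : EReal)}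

/-- `cr` is a rectification of `c`: it satisfies (i) and is `L`-a.s. minimal with it. -/
def IsRectification {X Y : Type*} [MeasurableSpace X] [MeasurableSpace Y]
    (μ : Measure X) (ν : Measure Y) (c cr : X × Y → ENNReal) : Prop :=
  SatI μ ν c cr ∧
    ∀ d : X × Y → ENNReal, SatI μ ν c d → LNeg μ ν {p : X × Y | ¬ cr p ≤ d p}

lemma LNeg.mono {X Y : Type*} [MeasurableSpace X] [MeasurableSpace Y]
    {μ : Measure X} {ν : Measure Y} {A B : Set (X × Y)} (hAB : A ⊆ B)
    (hB : LNeg μ ν B) : LNeg μ ν A := by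
  obtain ⟨M, N, hM, hN, hμ, hν, hsub⟩ := hB
  exact ⟨M, N, hM, hN, hμ, hν, hAB.trans hsub⟩

lemma LNeg.union {X Y : Type*} [MeasurableSpace X] [MeasurableSpace Y]
    {μ : Measure X} {ν : Measure Y} {A B : Set (X × Y)}
    (hA : LNeg μ ν A) (hB : LNeg μ ν B) : LNeg μ ν (A ∪ B) := by
  obtain ⟨M, N, hM, hN, hμ, hν, hs⟩ := hA
  obtain ⟨M', N', hM', hN', hμ', hν', hs'⟩ := hB
  refine ⟨M ∪ M', N ∪ N', hM.union hM', hN.union hN',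
    measure_union_null hμ hμ', measure_union_null hν hν', ?_⟩
  rintro p (hp | hp)
  · rcases hs hp with h | h
    · exact Or.inl ⟨Or.inl h.1, h.2⟩
    · exact Or.inr ⟨h.1, Or.inl h.2⟩
  · rcases hs' hp with h | h
    · exact Or.inl ⟨Or.inr h.1, h.2⟩
    · exact Or.inr ⟨h.1, Or.inr h.2⟩

lemma LNeg.iUnion {X Y : Type*} [MeasurableSpace X] [MeasurableSpace Y]
    {μ : Measure X} {ν : Measure Y} {ι : Type*} [Countable ι] {A : ι → Set (X × Y)}
    (hA : ∀ i, LNeg μ ν (A i)) : LNeg μ ν (⋃ i, A i) := by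
  choose M N hM hN hμ hν hs using hA
  refine ⟨⋃ i, M i, ⋃ i, N i, MeasurableSet.iUnion hM, MeasurableSet.iUnion hN,
    measure_iUnion_null hμ, measure_iUnion_null hν, ?_⟩
  rintro p hp
  obtain ⟨i, hi⟩ := mem_iUnion.1 hp
  rcases hs i hi with h | h
  · exact Or.inl ⟨mem_iUnion.2 ⟨i, h.1⟩, h.2⟩
  · exact Or.inr ⟨h.1, mem_iUnion.2 ⟨i, h.2⟩⟩
/-- If `c` is lower semi-continuous, then its rectification coincides with `c`
`L`-almost surely. -/
theorem stmt10 {X Y : Type*}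
    [TopologicalSpace X] [PolishSpace X] [MeasurableSpace X] [BorelSpace X]
    [TopologicalSpace Y] [PolishSpace Y] [MeasurableSpace Y] [BorelSpace Y]
    (μ : Measure X) (ν : Measure Y) [IsProbabilityMeasure μ] [IsProbabilityMeasure ν]
    (c : X × Y → ENNReal) (hc : LowerSemicontinuous c) (cr : X × Y → ENNReal)
    (h : IsRectification μ ν c cr) :
    LNeg μ ν {p : X × Y | cr p ≠ c p} := by
  classical
  -- part 1 : cr ≤ c L-a.s., since c itself satisfies (i)
  have hcc : SatI μ ν c c := by
    intro φ ψ _ _ _ _ hle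
    refine ⟨∅, ∅, MeasurableSet.empty, MeasurableSet.empty, measure_empty, measure_empty, ?_⟩
    intro p hp
    exact absurd (hle p.1 p.2) hp
  have h1 : LNeg μ ν {p : X × Y | ¬ cr p ≤ c p} := h.2 c hcc
  -- part 2 : c ≤ cr L-a.s., using lower semicontinuity
  obtain ⟨bX, hbXc, -, hbX⟩ := TopologicalSpace.exists_countable_basis X
  obtain ⟨bY, hbYc, -, hbY⟩ := TopologicalSpace.exists_countable_basis Y
  haveI := hbXc.to_subtype
  haveI := hbYc.to_subtype
  set e : Set X → Set Y → ENNReal := fun U V => ⨅ q ∈ U ×ˢ V, c q with he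
  set φ : ↑bX × ↑bY × ℕ → X → EReal := fun i x =>
    if x ∈ (i.1 : Set X) then ((min (e i.1 i.2.1) (i.2.2 : ENNReal) : ENNReal) : EReal) else ⊥
    with hφ
  set ψ : ↑bX × ↑bY × ℕ → Y → EReal := fun i y =>
    if y ∈ (i.2.1 : Set Y) then 0 else ⊥ with hψ
  have hmin_ne : ∀ i : ↑bX × ↑bY × ℕ, min (e i.1 i.2.1) (i.2.2 : ENNReal) ≠ ⊤ :=
    fun i => ne_top_of_le_ne_top (ENNReal.natCast_ne_top _) (min_le_right _ _)
  have hA : ∀ i : ↑bX × ↑bY × ℕ,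
      LNeg μ ν {p : X × Y | ¬ φ i p.1 + ψ i p.2 ≤ (cr p : EReal)} := by
    intro i
    refine h.1 (φ i) (ψ i) ?_ ?_ ?_ ?_ ?_
    · exact Measurable.ite ((hbX.isOpen i.1.2).measurableSet) measurable_const measurable_const
    · exact Measurable.ite ((hbY.isOpen i.2.1.2).measurableSet) measurable_const measurable_const
    · intro x
      simp only [hφ]
      split_ifs
      · simp [hmin_ne i]
      · simp
    · intro y
      simp only [hψ]
      split_ifs <;> simp
    · intro x y
      simp only [hφ, hψ]
      split_ifs with hx hy
      · rw [add_zero, EReal.coe_ennreal_le_coe_ennreal_iff]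
        exact le_trans (min_le_left _ _) (iInf₂_le (x, y) ⟨hx, hy⟩)
      · rw [EReal.add_bot]; exact bot_le
      · rw [EReal.bot_add]; exact bot_le
      · rw [EReal.bot_add]; exact bot_le
  have h2 : LNeg μ ν {p : X × Y | ¬ c p ≤ cr p} := by
    refine LNeg.mono ?_ (LNeg.iUnion hA)
    intro p hp
    have hlt : cr p < c p := lt_of_not_ge hp
    obtain ⟨t, ht1, ht2⟩ := exists_between hlt
    have hnhds : {q : X × Y | t < c q} ∈ nhds p := hc p t ht2
    obtain ⟨s, hs, hps, hssub⟩ := ((hbX.prod hbY).mem_nhds_iff).1 hnhds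
    obtain ⟨U, hU, V, hV, rfl⟩ := hs
    have hte : t ≤ e U V := le_iInf₂ fun q hq => (hssub hq).le
    have htne : t ≠ ⊤ := (lt_of_lt_of_le ht2 le_top).ne
    obtain ⟨k, hk⟩ := ENNReal.exists_nat_gt htne
    refine mem_iUnion.2 ⟨(⟨U, hU⟩, ⟨V, hV⟩, k), ?_⟩
    simp only [mem_setOf_eq, hφ, hψ, if_pos hps.1, if_pos hps.2, add_zero]
    intro hle
    rw [EReal.coe_ennreal_le_coe_ennreal_iff] at hle
    have : t ≤ cr p := le_trans (le_min hte hk.le) hle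
    exact absurd (lt_of_lt_of_le ht1 this) (lt_irrefl _)
  refine LNeg.mono ?_ (h1.union h2)
  intro p hp
  by_cases hcase : cr p ≤ c p
  · exact Or.inr fun hle => hp (le_antisymm hcase hle)
  · exact Or.inl hcase
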